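/- Let d ≥ 1, ε > 0, and let φ be a real-valued Schwartz function on ℝ^d with φ not identically zero. Let e^{εΔ} denote convolution with the Gaussian (4πε)^{−d/2} e^{−|x|²/(4ε)}. Then the pointwise Cauchy–Schwarz bound (e^{εΔ}(φ ∇φ))(x)² ≤ (e^{εΔ}(φ²))(x) · (e^{εΔ}(|∇φ|²))(x) holds for all x, and consequently ∫_{ℝ^d} |∇ ( (e^{εΔ}(φ²))^{1/2} )(x)|² dx ≤ ∫_{ℝ^d} |∇φ(x)|² dx. -/

import Mathlib

open MeasureTheory Filter Topology

noncomputable section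

abbrev E (d : ℕ) := EuclideanSpace ℝ (Fin d)

/-- The kernel `(λ−Δ)^{−s/2}(x,y)` for real `λ > 0`:
`Γ(s/2)⁻¹ ∫₀^∞ t^{s/2−1} e^{−λt} (4πt)^{−d/2} e^{−|x−y|²/(4t)} dt`. -/
def rker (d : ℕ) (s lam : ℝ) (x y : E d) : ℝ :=
  (Real.Gamma (s / 2))⁻¹ *
    ∫ t in Set.Ioi (0 : ℝ),
      t ^ (s / 2 - 1) * Real.exp (-(lam * t)) *
        ((4 * Real.pi * t) ^ (-(d : ℝ) / 2) * Real.exp (-(‖x - y‖ ^ 2 / (4 * t))))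

/-- The operator `(λ−Δ)^{−s/2}` applied to a function `f`. -/
def rop (d : ℕ) (s lam : ℝ) (f : E d → ℝ) (x : E d) : ℝ :=
  ∫ y, rker d s lam x y * f y

/-- The heat kernel: `e^{εΔ}` is convolution with `(4πε)^{−d/2} e^{−|z|²/(4ε)}`. -/
def heatK (d : ℕ) (ε : ℝ) (z : E d) : ℝ :=
  (4 * Real.pi * ε) ^ (-(d : ℝ) / 2) * Real.exp (-(‖z‖ ^ 2 / (4 * ε)))

section Aux

variable {d : ℕ} {ε : ℝ}

lemma heatK_eq (z : E d) :
    heatK d ε z = (4 * Real.pi * ε) ^ (-(d : ℝ) / 2) *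
      Real.exp (-(4 * ε)⁻¹ * ‖z‖ ^ 2) := by
  unfold heatK
  congr 2
  ring

lemma heatK_pos (hε : 0 < ε) (z : E d) : 0 < heatK d ε z := by
  unfold heatK
  have : (0:ℝ) < 4 * Real.pi * ε := by positivity
  positivity

lemma heatK_continuous : Continuous (heatK d ε) := by
  unfold heatK
  fun_prop

set_option maxHeartbeats 1000000 in
lemma heatK_integrable (hε : 0 < ε) : Integrable (heatK d ε) := by
  have hb : (0:ℝ) < (4 * ε)⁻¹ := by positivity
  have hbc : (0:ℝ) < ((((4 * ε : ℝ))⁻¹ : ℂ)).re := by simpa using hb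
  have h := (GaussianFourier.integrable_cexp_neg_mul_sq_norm_add (V := E d) hbc 0 0).norm
  have : Integrable (fun z : E d => Real.exp (-(4 * ε)⁻¹ * ‖z‖ ^ 2)) := by
    refine h.congr (Eventually.of_forall fun z => ?_)
    have h2 : (-((4 * ε : ℝ):ℂ)⁻¹ * (‖z‖:ℂ) ^ 2 + (0:ℂ) * ((inner ℝ (0 : E d) z : ℝ) : ℂ))
        = ((-(4 * ε)⁻¹ * ‖z‖ ^ 2 : ℝ) : ℂ) := by
      push_cast; ring
    show ‖Complex.exp _‖ = _
    rw [h2, ← Complex.ofReal_exp, Complex.norm_real, Real.norm_eq_abs,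
      abs_of_pos (Real.exp_pos _)]
  exact (this.const_mul ((4 * Real.pi * ε) ^ (-(d : ℝ) / 2))).congr
    (Eventually.of_forall fun z => (heatK_eq z).symm)

lemma heatK_integral (hε : 0 < ε) : ∫ z : E d, heatK d ε z = 1 := by
  have hb : (0:ℝ) < (4 * ε)⁻¹ := by positivity
  have h := GaussianFourier.integral_rexp_neg_mul_sq_norm (V := E d) hb
  simp_rw [heatK_eq, integral_const_mul, neg_mul] at *
  rw [h]
  have h1 : Real.pi / (4 * ε)⁻¹ = 4 * Real.pi * ε := by field_simp
  have h2 : (Module.finrank ℝ (E d) : ℝ) = (d : ℝ) := by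
    simp [finrank_euclideanSpace_fin]
  rw [h1, h2, ← Real.rpow_add (by positivity)]
  have h3 : -(d:ℝ) / 2 + (d:ℝ) / 2 = 0 := by ring
  rw [h3, Real.rpow_zero]

lemma grad_eq (φ : SchwartzMap (E d) ℝ) (y : E d) :
    gradient ⇑φ y = (InnerProductSpace.toDual ℝ (E d)).symm (SchwartzMap.fderivCLM ℝ (E d) ℝ φ y) := by
  simp [gradient, SchwartzMap.fderivCLM_apply]

lemma grad_norm (φ : SchwartzMap (E d) ℝ) (y : E d) :
    ‖gradient ⇑φ y‖ = ‖SchwartzMap.fderivCLM ℝ (E d) ℝ φ y‖ := by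
  rw [grad_eq]; exact LinearIsometryEquiv.norm_map _ _

lemma grad_continuous (φ : SchwartzMap (E d) ℝ) : Continuous (gradient ⇑φ) := by
  have : gradient ⇑φ = fun y =>
      (InnerProductSpace.toDual ℝ (E d)).symm (SchwartzMap.fderivCLM ℝ (E d) ℝ φ y) :=
    funext (grad_eq φ)
  rw [this]
  exact (LinearIsometryEquiv.continuous _).comp (SchwartzMap.fderivCLM ℝ (E d) ℝ φ).continuous

lemma integrable_heatK_smul {G : Type*} [NormedAddCommGroup G] [NormedSpace ℝ G]
    (hε : 0 < ε) (x : E d) {g : E d → G} (hg : Continuous g) {C : ℝ}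
    (hC : ∀ y, ‖g y‖ ≤ C) :
    Integrable (fun y => heatK d ε (x - y) • g y) := by
  have hk : Integrable (fun y => heatK d ε (x - y)) :=
    (heatK_integrable hε).comp_sub_left x
  refine Integrable.mono' (hk.mul_const C) ?_ ?_
  · exact ((heatK_continuous.comp (continuous_const.sub continuous_id)).smul
      hg).aestronglyMeasurable
  · refine Eventually.of_forall fun y => ?_
    rw [norm_smul, Real.norm_eq_abs, abs_of_pos (heatK_pos hε _)]
    exact mul_le_mul_of_nonneg_left (hC y) (heatK_pos hε _).le

lemma cs_pointwise (hε : 0 < ε) (φ : SchwartzMap (E d) ℝ) (x : E d) :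
    ‖∫ y, heatK d ε (x - y) • (φ y • gradient (⇑φ) y)‖ ^ 2 ≤
      (∫ y, heatK d ε (x - y) * (φ y) ^ 2) *
        ∫ y, heatK d ε (x - y) * ‖gradient (⇑φ) y‖ ^ 2 := by
  set ψ := SchwartzMap.fderivCLM ℝ (E d) ℝ φ with hψ
  set k : E d → ℝ := fun y => heatK d ε (x - y) with hk
  have hk0 : ∀ y, 0 ≤ k y := fun y => (heatK_pos hε _).le
  set f : E d → ℝ := fun y => Real.sqrt (k y) * |φ y| with hf
  set g : E d → ℝ := fun y => Real.sqrt (k y) * ‖gradient (⇑φ) y‖ with hg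
  have hkc : Continuous k := heatK_continuous.comp (continuous_const.sub continuous_id)
  have hfc : Continuous f := (hkc.sqrt).mul φ.continuous.abs
  have hgc : Continuous g := (hkc.sqrt).mul (grad_continuous φ).norm
  have hCφ : ∀ y, ‖φ y‖ ≤ SchwartzMap.seminorm ℝ 0 0 φ := fun y =>
    SchwartzMap.norm_le_seminorm ℝ φ y
  have hCψ : ∀ y, ‖gradient (⇑φ) y‖ ≤ SchwartzMap.seminorm ℝ 0 0 ψ := fun y => by
    rw [grad_norm]; exact SchwartzMap.norm_le_seminorm ℝ ψ y
  have hf2 : ∀ y, f y ^ 2 = k y * φ y ^ 2 := fun y => by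
    rw [hf, mul_pow, Real.sq_sqrt (hk0 y), sq_abs]
  have hg2 : ∀ y, g y ^ 2 = k y * ‖gradient (⇑φ) y‖ ^ 2 := fun y => by
    rw [hg, mul_pow, Real.sq_sqrt (hk0 y)]
  have hIf : Integrable (fun y => f y ^ 2) := by
    have := integrable_heatK_smul hε x (g := fun y => φ y ^ 2)
      (φ.continuous.pow 2) (C := (SchwartzMap.seminorm ℝ 0 0 φ) ^ 2)
      (fun y => by
        rw [Real.norm_eq_abs, abs_pow, ← Real.norm_eq_abs]
        exact pow_le_pow_left₀ (norm_nonneg _) (hCφ y) 2)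
    exact this.congr (Eventually.of_forall fun y => by
      show heatK d ε (x - y) * φ y ^ 2 = f y ^ 2
      rw [hf2 y])
  have hIg : Integrable (fun y => g y ^ 2) := by
    have := integrable_heatK_smul hε x (g := fun y => ‖gradient (⇑φ) y‖ ^ 2)
      ((grad_continuous φ).norm.pow 2) (C := (SchwartzMap.seminorm ℝ 0 0 ψ) ^ 2)
      (fun y => by
        rw [Real.norm_eq_abs, abs_pow, abs_norm]
        exact pow_le_pow_left₀ (norm_nonneg _) (hCψ y) 2)
    exact this.congr (Eventually.of_forall fun y => by
      show heatK d ε (x - y) * ‖gradient (⇑φ) y‖ ^ 2 = g y ^ 2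
      rw [hg2 y])
  have hA : 0 ≤ ∫ y, k y * φ y ^ 2 :=
    integral_nonneg fun y => mul_nonneg (hk0 y) (by positivity)
  have hB : 0 ≤ ∫ y, k y * ‖gradient (⇑φ) y‖ ^ 2 :=
    integral_nonneg fun y => mul_nonneg (hk0 y) (by positivity)
  have step1 : ‖∫ y, k y • (φ y • gradient (⇑φ) y)‖ ≤ ∫ y, f y * g y := by
    refine (norm_integral_le_integral_norm _).trans_eq (integral_congr_ae
      (Eventually.of_forall fun y => ?_))
    show ‖k y • φ y • gradient (⇑φ) y‖ = f y * g y
    rw [norm_smul, norm_smul, Real.norm_eq_abs, Real.norm_eq_abs,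
      abs_of_nonneg (hk0 y)]
    rw [hf, hg, ← Real.mul_self_sqrt (hk0 y)]
    ring
  have hconj : Real.HolderConjugate 2 2 := Real.HolderConjugate.two_two
  have step2 := integral_mul_le_Lp_mul_Lq_of_nonneg (μ := volume) hconj
    (f := f) (g := g)
    (Eventually.of_forall fun y => by positivity)
    (Eventually.of_forall fun y => by positivity)
    (by
      rw [show ENNReal.ofReal (2:ℝ) = 2 by norm_num]
      exact (memLp_two_iff_integrable_sq hfc.aestronglyMeasurable).2 hIf)
    (by
      rw [show ENNReal.ofReal (2:ℝ) = 2 by norm_num]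
      exact (memLp_two_iff_integrable_sq hgc.aestronglyMeasurable).2 hIg)
  simp_rw [Real.rpow_two] at step2
  have step3 : ‖∫ y, k y • (φ y • gradient (⇑φ) y)‖ ≤
      (∫ y, f y ^ 2) ^ ((1:ℝ)/2) * (∫ y, g y ^ 2) ^ ((1:ℝ)/2) :=
    step1.trans step2
  have hAeq : ∫ y, f y ^ 2 = ∫ y, k y * φ y ^ 2 := integral_congr_ae
    (Eventually.of_forall fun y => hf2 y)
  have hBeq : ∫ y, g y ^ 2 = ∫ y, k y * ‖gradient (⇑φ) y‖ ^ 2 := integral_congr_ae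
    (Eventually.of_forall fun y => hg2 y)
  rw [hAeq, hBeq] at step3
  calc ‖∫ y, k y • (φ y • gradient (⇑φ) y)‖ ^ 2
      ≤ ((∫ y, k y * φ y ^ 2) ^ ((1:ℝ)/2) *
          (∫ y, k y * ‖gradient (⇑φ) y‖ ^ 2) ^ ((1:ℝ)/2)) ^ 2 :=
        pow_le_pow_left₀ (norm_nonneg _) step3 2
    _ = (∫ y, k y * φ y ^ 2) * ∫ y, k y * ‖gradient (⇑φ) y‖ ^ 2 := by
        have hsq : ∀ X : ℝ, 0 ≤ X → (X ^ ((1:ℝ)/2)) ^ (2:ℕ) = X := fun X hX => by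
          rw [← Real.rpow_natCast (X ^ ((1:ℝ)/2)) 2, ← Real.rpow_mul hX]; norm_num
        rw [mul_pow, hsq _ hA, hsq _ hB]

lemma integrable_heatK_mul_sq (hε : 0 < ε) (φ : SchwartzMap (E d) ℝ) (z : E d) :
    Integrable (fun y => heatK d ε (z - y) * φ y ^ 2) := by
  have hk : Integrable (fun y => heatK d ε (z - y)) :=
    (heatK_integrable hε).comp_sub_left z
  refine Integrable.mono' (hk.mul_const ((SchwartzMap.seminorm ℝ 0 0 φ) ^ 2)) ?_ ?_
  · exact ((heatK_continuous.comp (continuous_const.sub continuous_id)).mul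
      (φ.continuous.pow 2)).aestronglyMeasurable
  · refine Eventually.of_forall fun y => ?_
    rw [Real.norm_eq_abs, abs_mul, abs_of_pos (heatK_pos hε _), abs_pow, sq_abs]
    refine mul_le_mul_of_nonneg_left ?_ (heatK_pos hε _).le
    have := SchwartzMap.norm_le_seminorm ℝ φ y
    rw [Real.norm_eq_abs] at this
    nlinarith [abs_nonneg (φ y), sq_abs (φ y)]

lemma u_pos (hε : 0 < ε) (φ : SchwartzMap (E d) ℝ) (hφ : ∃ x, φ x ≠ 0) (z : E d) :
    0 < ∫ y, heatK d ε (z - y) * φ y ^ 2 := by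
  obtain ⟨y₀, hy₀⟩ := hφ
  rw [integral_pos_iff_support_of_nonneg
    (fun y => mul_nonneg (heatK_pos hε _).le (sq_nonneg _))
    (integrable_heatK_mul_sq hε φ z)]
  have hopen : IsOpen {y : E d | φ y ≠ 0} :=
    isOpen_ne.preimage φ.continuous
  have hsub : {y : E d | φ y ≠ 0} ⊆
      Function.support (fun y => heatK d ε (z - y) * φ y ^ 2) := fun y hy =>
    (mul_pos (heatK_pos hε _) (sq_pos_of_ne_zero hy)).ne'
  exact lt_of_lt_of_le (hopen.measure_pos volume ⟨y₀, hy₀⟩) (measure_mono hsub)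

set_option maxHeartbeats 1000000 in
set_option synthInstance.maxHeartbeats 200000 in
lemma hasFDerivAt_u (hε : 0 < ε) (φ : SchwartzMap (E d) ℝ) (z₀ : E d) :
    HasFDerivAt (fun z : E d => ∫ y, heatK d ε (z - y) * φ y ^ 2)
      (∫ y, (heatK d ε (z₀ - y) * (2 * φ y)) • (SchwartzMap.fderivCLM ℝ (E d) ℝ φ y : E d →L[ℝ] ℝ)) z₀ := by
  set ψ := SchwartzMap.fderivCLM ℝ (E d) ℝ φ with hψ
  set Cφ := SchwartzMap.seminorm ℝ 0 0 φ with hCφdef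
  set Cψ := SchwartzMap.seminorm ℝ 0 0 ψ with hCψdef
  have hCφ : ∀ y, |φ y| ≤ Cφ := fun y => by
    have := SchwartzMap.norm_le_seminorm ℝ φ y; rwa [Real.norm_eq_abs] at this
  have hCψ : ∀ y, ‖ψ y‖ ≤ Cψ := fun y => SchwartzMap.norm_le_seminorm ℝ ψ y
  have hu : ∀ z : E d, (∫ y, heatK d ε (z - y) * φ y ^ 2)
      = ∫ w, heatK d ε w * φ (z - w) ^ 2 := by
    intro z
    have h := integral_sub_left_eq_self
      (fun w => heatK d ε w * φ (z - w) ^ 2) volume z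
    rw [← h]
    congr 1
    funext y
    rw [sub_sub_cancel]
  have key : HasFDerivAt (fun z : E d => ∫ w, heatK d ε w * φ (z - w) ^ 2)
      (∫ w, (heatK d ε w * (2 * φ (z₀ - w))) • (ψ (z₀ - w) : E d →L[ℝ] ℝ)) z₀ := by
    apply hasFDerivAt_integral_of_dominated_of_fderiv_le
      (F' := fun z w => (heatK d ε w * (2 * φ (z - w))) • (ψ (z - w) : E d →L[ℝ] ℝ))
      (bound := fun w => heatK d ε w * (2 * Cφ * Cψ)) (s := Metric.ball z₀ 1) (Metric.ball_mem_nhds z₀ one_pos)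
    · exact Eventually.of_forall fun z =>
        (heatK_continuous.mul ((φ.continuous.comp
          (continuous_const.sub continuous_id)).pow 2)).aestronglyMeasurable
    · refine Integrable.mono' ((heatK_integrable hε).mul_const (Cφ ^ 2)) ?_ ?_
      · exact (heatK_continuous.mul ((φ.continuous.comp
          (continuous_const.sub continuous_id)).pow 2)).aestronglyMeasurable
      · refine Eventually.of_forall fun w => ?_
        rw [Real.norm_eq_abs, abs_mul, abs_of_pos (heatK_pos hε _), abs_pow, sq_abs]
        refine mul_le_mul_of_nonneg_left ?_ (heatK_pos hε _).le
        have := hCφ (z₀ - w)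
        nlinarith [abs_nonneg (φ (z₀ - w)), sq_abs (φ (z₀ - w))]
    · apply Continuous.aestronglyMeasurable
      exact (heatK_continuous.mul ((continuous_const.mul (φ.continuous.comp
        (continuous_const.sub continuous_id))))).smul
        (ψ.continuous.comp (continuous_const.sub continuous_id))
    · refine Eventually.of_forall fun w => fun z _ => ?_
      rw [norm_smul (heatK d ε w * (2 * φ (z - w))) (ψ (z - w) : E d →L[ℝ] ℝ),
        Real.norm_eq_abs, abs_mul, abs_of_pos (heatK_pos hε _), mul_assoc]
      refine mul_le_mul_of_nonneg_left ?_ (heatK_pos hε _).le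
      have h1 := hCφ (z - w)
      have h2 := hCψ (z - w)
      have h3 : |2 * φ (z - w)| = 2 * |φ (z - w)| := by
        rw [abs_mul]; norm_num
      rw [h3]
      nlinarith [abs_nonneg (φ (z - w)), norm_nonneg (ψ (z - w)),
        (abs_nonneg (φ (z - w))).trans h1]
    · exact (heatK_integrable hε).mul_const _
    · refine Eventually.of_forall fun w => fun z _ => ?_
      have h1 : HasFDerivAt (fun z : E d => z - w)
          (ContinuousLinearMap.id ℝ (E d)) z := (hasFDerivAt_id z).sub_const w
      have h2 : HasFDerivAt (⇑φ) (ψ (z - w) : E d →L[ℝ] ℝ) (z - w) := by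
        have := (φ.differentiable.differentiableAt (x := z - w)).hasFDerivAt
        rwa [← SchwartzMap.fderivCLM_apply (𝕜 := ℝ)] at this
      have h3 := h2.comp z h1
      have h4 := h3.mul h3
      have h5 := h4.const_mul (heatK d ε w)
      have hfun : (fun z : E d => heatK d ε w * φ (z - w) ^ 2)
          = fun z : E d => heatK d ε w * (φ (z - w) * φ (z - w)) := by
        funext z; rw [pow_two]
      have h6 : HasFDerivAt (fun z : E d => heatK d ε w * (φ (z - w) * φ (z - w)))
          ((heatK d ε w * (2 * φ (z - w))) • (ψ (z - w) : E d →L[ℝ] ℝ)) z := by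
        rw [show (heatK d ε w * (2 * φ (z - w))) • (ψ (z - w) : E d →L[ℝ] ℝ)
            = heatK d ε w • (φ (z - w) • (ψ (z - w)).comp (ContinuousLinearMap.id ℝ (E d))
              + φ (z - w) • (ψ (z - w)).comp (ContinuousLinearMap.id ℝ (E d))) from by
          rw [ContinuousLinearMap.comp_id]; module]
        exact h5
      rw [hfun]
      exact h6
  have hfe : (fun z : E d => ∫ y, heatK d ε (z - y) * φ y ^ 2)
      = fun z : E d => ∫ w, heatK d ε w * φ (z - w) ^ 2 := funext hu
  rw [hfe]
  convert key using 1
  have h := integral_sub_left_eq_self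
    (fun y => (heatK d ε (z₀ - y) * (2 * φ y)) • (ψ y : E d →L[ℝ] ℝ)) volume z₀
  rw [← h]
  congr 1
  funext w
  rw [sub_sub_cancel]

end Aux

/-- the pointwise Cauchy–Schwarz bound
`(e^{εΔ}(φ∇φ))² ≤ e^{εΔ}(φ²) · e^{εΔ}(|∇φ|²)` and the resulting Dirichlet-energy bound
`∫ |∇(e^{εΔ}(φ²))^{1/2}|² ≤ ∫ |∇φ|²`. -/
theorem statement9 (d : ℕ) (hd : 1 ≤ d) (ε : ℝ) (hε : 0 < ε)
    (φ : SchwartzMap (E d) ℝ) (hφ : ∃ x, φ x ≠ 0) :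
    (∀ x : E d,
      ‖∫ y, heatK d ε (x - y) • (φ y • gradient (⇑φ) y)‖ ^ 2 ≤
        (∫ y, heatK d ε (x - y) * (φ y) ^ 2) *
          ∫ y, heatK d ε (x - y) * ‖gradient (⇑φ) y‖ ^ 2) ∧
    (∫ x, ‖gradient
        (fun z : E d => Real.sqrt (∫ y, heatK d ε (z - y) * (φ y) ^ 2)) x‖ ^ 2) ≤
      ∫ x, ‖gradient (⇑φ) x‖ ^ 2 := by
  constructor
  · exact fun x => cs_pointwise hε φ x
  set ψ := SchwartzMap.fderivCLM ℝ (E d) ℝ φ with hψdef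
  set J : (E d →L[ℝ] ℝ) →ₗᵢ[ℝ] E d :=
    (InnerProductSpace.toDual ℝ (E d)).symm.toLinearIsometry with hJdef
  set squ : E d → ℝ := fun z : E d => Real.sqrt (∫ y, heatK d ε (z - y) * (φ y) ^ 2)
    with hsqu
  have hCψ : ∀ y, ‖ψ y‖ ≤ SchwartzMap.seminorm ℝ 0 0 ψ := fun y =>
    SchwartzMap.norm_le_seminorm ℝ ψ y
  -- pointwise bound
  have hpt : ∀ x : E d, ‖gradient squ x‖ ^ 2 ≤
      ∫ y, heatK d ε (x - y) * ‖gradient (⇑φ) y‖ ^ 2 := by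
    intro x
    have hux : 0 < ∫ y, heatK d ε (x - y) * φ y ^ 2 := u_pos hε φ hφ x
    have hD := hasFDerivAt_u hε φ x
    set ux := ∫ y, heatK d ε (x - y) * φ y ^ 2 with huxdef
    set s := Real.sqrt ux with hsdef
    have hs : 0 < s := Real.sqrt_pos.2 hux
    have hsqrt : HasFDerivAt squ
        ((1 / (2 * s)) • (∫ y, (heatK d ε (x - y) * (2 * φ y)) • (ψ y : E d →L[ℝ] ℝ))) x :=
      (Real.hasDerivAt_sqrt hux.ne').comp_hasFDerivAt x hD
    set Mx := ∫ y, heatK d ε (x - y) • (φ y • (ψ y : E d →L[ℝ] ℝ)) with hMxdef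
    have hDM : (∫ y, (heatK d ε (x - y) * (2 * φ y)) • (ψ y : E d →L[ℝ] ℝ))
        = (2:ℝ) • Mx := by
      rw [hMxdef, ← integral_smul]
      congr 1
      funext y
      module
    have hWM : (∫ y, heatK d ε (x - y) • (φ y • gradient (⇑φ) y)) = J Mx := by
      rw [hMxdef, ← LinearIsometry.integral_comp_comm J]
      congr 1
      funext y
      rw [_root_.map_smul, _root_.map_smul, grad_eq]
      rfl
    have hnormW : ‖∫ y, heatK d ε (x - y) • (φ y • gradient (⇑φ) y)‖ = ‖Mx‖ := by
      rw [hWM]; exact J.norm_map _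
    have hgradnorm : ‖gradient squ x‖ = ‖fderiv ℝ squ x‖ :=
      LinearIsometryEquiv.norm_map (InnerProductSpace.toDual ℝ (E d)).symm _
    have hpos2s : (0:ℝ) < 1 / (2 * s) := by positivity
    have h1 : ‖gradient squ x‖ = s⁻¹ * ‖Mx‖ := by
      rw [hgradnorm, hsqrt.fderiv, hDM, norm_smul, norm_smul,
        Real.norm_eq_abs, Real.norm_eq_abs, abs_of_pos hpos2s,
        abs_of_pos (by norm_num : (0:ℝ) < (2:ℝ))]
      field_simp
    have hcs := cs_pointwise hε φ x
    rw [hnormW] at hcs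
    have hvx : 0 ≤ ∫ y, heatK d ε (x - y) * ‖gradient (⇑φ) y‖ ^ 2 :=
      integral_nonneg fun y => mul_nonneg (heatK_pos hε _).le (by positivity)
    have h2 : ‖gradient squ x‖ ^ 2 = (s⁻¹) ^ 2 * ‖Mx‖ ^ 2 := by rw [h1, mul_pow]
    have h3 : (s⁻¹) ^ 2 * ‖Mx‖ ^ 2 ≤
        (s⁻¹) ^ 2 * (ux * ∫ y, heatK d ε (x - y) * ‖gradient (⇑φ) y‖ ^ 2) :=
      mul_le_mul_of_nonneg_left hcs (by positivity)
    have h4 : (s⁻¹) ^ 2 * (ux * ∫ y, heatK d ε (x - y) * ‖gradient (⇑φ) y‖ ^ 2)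
        = ∫ y, heatK d ε (x - y) * ‖gradient (⇑φ) y‖ ^ 2 := by
      have hseq : s ^ 2 = ux := Real.sq_sqrt hux.le
      rw [inv_pow, hseq, ← mul_assoc, inv_mul_cancel₀ hux.ne', one_mul]
    rw [h2]
    rw [h4] at h3
    exact h3
  -- the integral of the convolution bound
  have hh_int : Integrable (fun y : E d => ‖gradient (⇑φ) y‖ ^ 2) := by
    refine Integrable.mono' ((ψ.integrable.norm.const_mul (SchwartzMap.seminorm ℝ 0 0 ψ))) ?_ ?_
    · exact ((grad_continuous φ).norm.pow 2).aestronglyMeasurable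
    · refine Eventually.of_forall fun y => ?_
      rw [Real.norm_eq_abs, abs_of_nonneg (by positivity), grad_norm, pow_two]
      exact mul_le_mul_of_nonneg_right (hCψ y) (norm_nonneg _)
  have hveq : (fun x : E d => ∫ y, heatK d ε (x - y) * ‖gradient (⇑φ) y‖ ^ 2)
      = convolution (fun y : E d => ‖gradient (⇑φ) y‖ ^ 2) (heatK d ε)
          (ContinuousLinearMap.mul ℝ ℝ) volume := by
    funext x
    rw [convolution_def]
    congr 1
    funext y
    simp only [ContinuousLinearMap.mul_apply']
    ring
  have hv_int : Integrable
      (fun x : E d => ∫ y, heatK d ε (x - y) * ‖gradient (⇑φ) y‖ ^ 2) := by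
    rw [hveq]
    exact hh_int.integrable_convolution (ContinuousLinearMap.mul ℝ ℝ) (heatK_integrable hε)
  have hIv : (∫ x, ∫ y, heatK d ε (x - y) * ‖gradient (⇑φ) y‖ ^ 2)
      = ∫ x, ‖gradient (⇑φ) x‖ ^ 2 := by
    rw [hveq, integral_convolution (ContinuousLinearMap.mul ℝ ℝ) hh_int (heatK_integrable hε),
      heatK_integral hε]
    simp
  refine le_of_le_of_eq (integral_mono_of_nonneg
    (Eventually.of_forall fun x => by positivity) hv_int
    (Eventually.of_forall hpt)) hIv

end
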